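/- Let $\gamma > 0$, $w \in \mathbb{R}$, and $y^* = \sigma_\gamma(w)$. For every solution $y(t)$ of $y' = \gamma + w y - y^2$ with $y(0) = b \geq 0$ defined for all $t \geq 0$, one has $y(t) \to y^*$ as $t \to \infty$; i.e., $y^*$ is globally asymptotically stable on $[0, \infty)$. -/

import Mathlib

noncomputable def sigmaAct (γ w : ℝ) : ℝ := (w + Real.sqrt (w ^ 2 + 4 * γ)) / 2

/-- Global asymptotic stability of `y* = σ_γ(w)` for the chemical perceptron ODE
`y' = γ + w y - y²` with nonnegative initial condition. -/
theorem perceptron_global_stability (γ w b : ℝ) (hγ : 0 < γ) (hb : 0 ≤ b)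
    (y : ℝ → ℝ) (hy : ∀ t : ℝ, 0 ≤ t → HasDerivAt y (γ + w * y t - (y t) ^ 2) t)
    (hy0 : y 0 = b) :
    Filter.Tendsto y Filter.atTop (nhds (sigmaAct γ w)) := by
  set s := Real.sqrt (w ^ 2 + 4 * γ) with hs_def
  have hdisc : (0:ℝ) ≤ w ^ 2 + 4 * γ := by nlinarith [sq_nonneg w]
  have hs2 : s ^ 2 = w ^ 2 + 4 * γ := Real.sq_sqrt hdisc
  have hs0 : 0 ≤ s := Real.sqrt_nonneg _
  have hws : w < s := by nlinarith
  set Y := sigmaAct γ w with hY_def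
  have hYeq : Y = (w + s) / 2 := rfl
  set c := (s - w) / 2 with hc_def
  have hc : 0 < c := by rw [hc_def]; linarith
  have hYpos : 0 < Y := by rw [hYeq]; nlinarith
  have hroot : ∀ x : ℝ, γ + w * x - x ^ 2 = -((x - Y) * (x + c)) := by
    intro x
    rw [hYeq, hc_def]
    linear_combination (-1/4 : ℝ) * hs2
  have hcont : ∀ t : ℝ, 0 ≤ t → ContinuousAt y t := fun t ht => (hy t ht).continuousAt
  -- Step 1: forward invariance of nonnegativity
  have hnn : ∀ t : ℝ, 0 ≤ t → 0 ≤ y t := by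
    by_contra h
    push_neg at h
    obtain ⟨t₁, ht₁0, ht₁⟩ := h
    set m := max (y t₁ / 2) (-c / 2) with hm_def
    have hm_neg : m < 0 := by
      apply max_lt <;> linarith
    have hm_gt : -c < m := lt_of_lt_of_le (by linarith) (le_max_right _ _)
    have hyt₁m : y t₁ ≤ m := le_trans (by linarith) (le_max_left _ _)
    have h0t₁ : (0:ℝ) < t₁ := by
      rcases lt_or_eq_of_le ht₁0 with h | h
      · exact h
      · exfalso; rw [← h, hy0] at ht₁; linarith
    set S := Set.Icc 0 t₁ ∩ y ⁻¹' Set.Iic m with hS_def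
    have hSne : S.Nonempty := ⟨t₁, ⟨le_of_lt h0t₁, le_refl _⟩, hyt₁m⟩
    have hScl : IsClosed S := by
      apply ContinuousOn.preimage_isClosed_of_isClosed ?_ isClosed_Icc isClosed_Iic
      exact fun t ht => (hcont t ht.1).continuousWithinAt
    have hSbdd : BddBelow S := ⟨0, fun t ht => ht.1.1⟩
    set t₀ := sInf S with ht₀_def
    have ht₀S : t₀ ∈ S := hScl.csInf_mem hSne hSbdd
    have ht₀0 : 0 ≤ t₀ := ht₀S.1.1
    have ht₀pos : 0 < t₀ := by
      rcases lt_or_eq_of_le ht₀0 with h | h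
      · exact h
      · exfalso
        have h2 : y t₀ ≤ m := ht₀S.2
        rw [← h, hy0] at h2; linarith
    have hbefore : ∀ t, 0 ≤ t → t < t₀ → m < y t := by
      intro t ht htlt
      by_contra hle
      push_neg at hle
      have : t ∈ S := ⟨⟨ht, le_trans htlt.le ht₀S.1.2⟩, hle⟩
      exact absurd (csInf_le hSbdd this) (not_le.mpr htlt)
    have hyt₀ : y t₀ = m := by
      refine le_antisymm ht₀S.2 ?_
      by_contra hlt
      push_neg at hlt
      have hev : ∀ᶠ t in nhds t₀, y t < m :=
        (hcont t₀ ht₀0).eventually_lt continuousAt_const hlt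
      have hev2 : ∀ᶠ t in nhdsWithin t₀ (Set.Iio t₀), y t < m :=
        hev.filter_mono nhdsWithin_le_nhds
      have hmem : Set.Ioo 0 t₀ ∈ nhdsWithin t₀ (Set.Iio t₀) :=
        Ioo_mem_nhdsLT_of_mem ⟨ht₀pos, le_refl _⟩
      obtain ⟨t, htlt, htIoo⟩ := (hev2.and (Filter.eventually_of_mem hmem (fun x hx => hx))).exists
      exact absurd htlt (not_lt.mpr (hbefore t htIoo.1.le htIoo.2).le)
    have hd : HasDerivAt y (γ + w * y t₀ - (y t₀) ^ 2) t₀ := hy t₀ ht₀0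
    have hdpos : 0 < γ + w * y t₀ - (y t₀) ^ 2 := by
      rw [hyt₀, hroot m]
      have h1 : m - Y < 0 := by linarith
      have h2 : 0 < m + c := by linarith
      nlinarith
    have hslope : Filter.Tendsto (slope y t₀) (nhdsWithin t₀ {t₀}ᶜ)
        (nhds (γ + w * y t₀ - (y t₀) ^ 2)) := hasDerivAt_iff_tendsto_slope.mp hd
    have hslope' : Filter.Tendsto (slope y t₀) (nhdsWithin t₀ (Set.Iio t₀))
        (nhds (γ + w * y t₀ - (y t₀) ^ 2)) :=
      hslope.mono_left (nhdsWithin_mono _ (fun x hx => ne_of_lt hx))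
    have hle : γ + w * y t₀ - (y t₀) ^ 2 ≤ 0 := by
      refine le_of_tendsto hslope' ?_
      filter_upwards [Ioo_mem_nhdsLT_of_mem (Set.mem_Ioc.mpr ⟨ht₀pos, le_refl _⟩)] with t ht
      have h1 : y t₀ ≤ y t := by
        rw [hyt₀]; exact (hbefore t ht.1.le ht.2).le
      have h2 : t - t₀ ≤ 0 := by linarith [ht.2]
      rw [slope_def_field]
      exact div_nonpos_of_nonneg_of_nonpos (by linarith) h2
    exact absurd hle (not_le.mpr hdpos)
  -- Step 2: Lyapunov function with exponential decay
  set V := fun t => (y t - Y) ^ 2 with hV_def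
  set g := fun t => V t * Real.exp (2 * c * t) with hg_def
  have hg' : ∀ t, 0 ≤ t →
      HasDerivAt g (-(2 * Real.exp (2 * c * t) * (y t - Y) ^ 2 * y t)) t := by
    intro t ht
    have h1 : HasDerivAt (fun u => (y u - Y) ^ 2)
        (2 * (y t - Y) ^ 1 * (γ + w * y t - (y t) ^ 2)) t := by
      have := ((hy t ht).sub_const Y).fun_pow 2
      simpa using this
    have he : HasDerivAt (fun u : ℝ => 2 * c * u) (2 * c) t := by
      simpa using (hasDerivAt_id t).const_mul (2 * c)
    have h2 := h1.mul he.exp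
    refine h2.congr_deriv ?_
    rw [hroot (y t)]
    ring
  have hganti : AntitoneOn g (Set.Ici 0) := by
    apply antitoneOn_of_deriv_nonpos (convex_Ici 0)
    · exact fun t ht => ((hg' t ht).continuousAt).continuousWithinAt
    · intro t ht
      rw [interior_Ici] at ht
      exact ((hg' t (le_of_lt ht)).differentiableAt).differentiableWithinAt
    · intro t ht
      rw [interior_Ici] at ht
      rw [(hg' t (le_of_lt ht)).deriv]
      have h1 := hnn t (le_of_lt ht)
      have h2 := (Real.exp_pos (2 * c * t)).le
      have : 0 ≤ 2 * Real.exp (2 * c * t) * (y t - Y) ^ 2 * y t :=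
        mul_nonneg (mul_nonneg (by positivity) (sq_nonneg _)) h1
      linarith
  have hbound : ∀ t, 0 ≤ t → V t ≤ V 0 * Real.exp (-(2 * c * t)) := by
    intro t ht
    have h : g t ≤ g 0 := hganti Set.self_mem_Ici ht ht
    have hg0 : g 0 = V 0 := by simp [hg_def]
    rw [hg0] at h
    calc V t = V t * Real.exp (2 * c * t) * Real.exp (-(2 * c * t)) := by
              rw [mul_assoc, ← Real.exp_add]; simp
      _ ≤ V 0 * Real.exp (-(2 * c * t)) :=
          mul_le_mul_of_nonneg_right h (Real.exp_pos _).le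
  have hVlim : Filter.Tendsto V Filter.atTop (nhds 0) := by
    have h1 : Filter.Tendsto (fun t : ℝ => 2 * c * t) Filter.atTop Filter.atTop :=
      Filter.Tendsto.const_mul_atTop (by positivity) Filter.tendsto_id
    have h2 : Filter.Tendsto (fun t : ℝ => Real.exp (-(2 * c * t))) Filter.atTop (nhds 0) := by
      exact Real.tendsto_exp_neg_atTop_nhds_zero.comp h1
    have hup : Filter.Tendsto (fun t => V 0 * Real.exp (-(2 * c * t)))
        Filter.atTop (nhds 0) := by
      simpa using h2.const_mul (V 0)
    refine tendsto_of_tendsto_of_tendsto_of_le_of_le' tendsto_const_nhds hup ?_ ?_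
    · exact Filter.Eventually.of_forall (fun t => sq_nonneg _)
    · filter_upwards [Filter.eventually_ge_atTop (0:ℝ)] with t ht
      exact hbound t ht
  have habs : Filter.Tendsto (fun t => |y t - Y|) Filter.atTop (nhds 0) := by
    have h := (Real.continuous_sqrt.tendsto 0).comp hVlim
    rw [Real.sqrt_zero] at h
    have heq : (fun t => |y t - Y|) = fun t => Real.sqrt (V t) :=
      funext fun t => (Real.sqrt_sq_eq_abs _).symm
    rw [heq]
    simpa [Function.comp_def] using h
  have hdiff : Filter.Tendsto (fun t => y t - Y) Filter.atTop (nhds 0) := by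
    rw [tendsto_zero_iff_norm_tendsto_zero]
    simpa [Real.norm_eq_abs] using habs
  have hfin := hdiff.add_const Y
  simpa using hfin
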